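/- Let Ω ⊆ ℝⁿ be open, let φ : Ω → ℝ be twice continuously differentiable, let ξ > 0 and γ₀ > 0, and let V : Ω → ℝⁿ be a continuously differentiable vector field with compact support in Ω. Define T_{ij} := γ₀ [ ((ξ/2)|∇φ|² + W(φ)/ξ) δ_{ij} − ξ (∂_i φ)(∂_j φ) ]. Then ∫_Ω γ₀ ( −ξ Δφ + W'(φ)/ξ ) (∇φ · V) dx = − ∫_Ω T : ∇V dx, where T : ∇V := ∑_{i,j} T_{ij} ∂_j V_i. -/

import Mathlib

open MeasureTheory Filter Topology

/-- The quartic double-well potential `W(s) = 18 s² (1-s)²`. -/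
noncomputable def W (s : ℝ) : ℝ := 18 * s ^ 2 * (1 - s) ^ 2

/-- Its derivative `W'(s) = 36 s (1-s)(1-2s)`. -/
noncomputable def W' (s : ℝ) : ℝ := 36 * s * (1 - s) * (1 - 2 * s)

/-- The partial derivative `∂_i f` of a scalar field on `ℝⁿ`. -/
noncomputable def pd {n : ℕ} (f : EuclideanSpace ℝ (Fin n) → ℝ) (i : Fin n)
    (x : EuclideanSpace ℝ (Fin n)) : ℝ :=
  fderiv ℝ f x (EuclideanSpace.single i 1)

/-- The surface stress tensor
`T_{ij} = γ₀ [ ((ξ/2)|∇φ|² + W(φ)/ξ) δ_{ij} − ξ (∂_i φ)(∂_j φ) ]`. -/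
noncomputable def Tsur {n : ℕ} (γ₀ ξ : ℝ) (φ : EuclideanSpace ℝ (Fin n) → ℝ)
    (i j : Fin n) (x : EuclideanSpace ℝ (Fin n)) : ℝ :=
  γ₀ * ((ξ / 2 * ∑ l, (pd φ l x) ^ 2 + W (φ x) / ξ) * (if i = j then 1 else 0)
    - ξ * pd φ i x * pd φ j x)

section aux

open Metric Set

/-- Key integration-by-parts ingredient: the integral of a directional derivative of a
compactly supported `C¹` function vanishes. -/
lemma integral_pd_zero {n : ℕ} (h : EuclideanSpace ℝ (Fin n) → ℝ)
    (hh : ContDiff ℝ 1 h) (hc : HasCompactSupport h) (v : EuclideanSpace ℝ (Fin n)) :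
    ∫ x, fderiv ℝ h x v = 0 := by
  rcases (tsupport h).eq_empty_or_nonempty with hK | hK
  · have hz : h = fun _ => 0 := by
      funext x
      by_contra hx
      exact absurd (subset_tsupport h hx) (by simp [hK])
    simp [hz]
  set K1 : Set (EuclideanSpace ℝ (Fin n)) := cthickening 1 (tsupport h) with hK1
  have hK1c : IsCompact K1 := hc.cthickening
  have hK1ne : K1.Nonempty := hK.mono (self_subset_cthickening _)
  set g : EuclideanSpace ℝ (Fin n) → ℝ := fun x => max (1 - infDist x K1) 0 with hgdef
  have hgl : LipschitzWith 1 g := by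
    have h1 : LipschitzWith 1 (fun x : EuclideanSpace ℝ (Fin n) => 1 - infDist x K1) := by
      intro x y
      have h2 := lipschitz_infDist_pt K1 x y
      simp only [edist_dist, Real.dist_eq] at h2 ⊢
      convert h2 using 2
      rw [show (1 - infDist x K1) - (1 - infDist y K1) = -(infDist x K1 - infDist y K1) by ring,
        abs_neg]
    exact h1.max_const 0
  have hg1 : ∀ x ∈ thickening 1 (tsupport h), g x = 1 := by
    intro x hx
    have : x ∈ K1 := thickening_subset_cthickening _ _ hx
    simp [hgdef, infDist_zero_of_mem this]
  have hgsupp : Function.support g ⊆ cthickening 1 K1 := by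
    intro x hx
    have h1 : infDist x K1 < 1 := by
      by_contra hle
      push_neg at hle
      exact hx (by simp [hgdef, sub_nonpos.2 hle])
    exact thickening_subset_cthickening _ _ ((mem_thickening_iff_infDist_lt hK1ne).2 h1)
  have hgc : HasCompactSupport g :=
    HasCompactSupport.of_support_subset_isCompact hK1c.cthickening hgsupp
  obtain ⟨C, hCl⟩ := hh.lipschitzWith_of_hasCompactSupport hc one_ne_zero
  have key := LipschitzWith.integral_lineDeriv_mul_eq (μ := volume) hCl hgl hgc v
  have lhs : ∀ x, lineDeriv ℝ h x v * g x = fderiv ℝ h x v := by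
    intro x
    by_cases hx : x ∈ thickening 1 (tsupport h)
    · rw [hg1 x hx, mul_one, (hh.differentiable one_ne_zero x).lineDeriv_eq_fderiv]
    · have hx' : x ∉ tsupport h := fun hmem => hx (self_subset_thickening one_pos _ hmem)
      have hev : h =ᶠ[nhds x] (fun _ => 0) := by
        filter_upwards [(isClosed_tsupport h).isOpen_compl.mem_nhds hx'] with y hy
        exact image_eq_zero_of_notMem_tsupport hy
      rw [(hh.differentiable one_ne_zero x).lineDeriv_eq_fderiv, hev.fderiv_eq]
      simp
  have rhs : ∀ x, lineDeriv ℝ g x (-v) * h x = 0 := by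
    intro x
    by_cases hx : h x = 0
    · simp [hx]
    · have hx1 : x ∈ thickening 1 (tsupport h) :=
        self_subset_thickening one_pos _ (subset_tsupport h hx)
      have hev : g =ᶠ[nhds x] (fun _ => 1) := by
        filter_upwards [isOpen_thickening.mem_nhds hx1] with y hy
        exact hg1 y hy
      rw [hev.lineDeriv_eq, (differentiableAt_const (1:ℝ)).lineDeriv_eq_fderiv]
      simp
  simp only [lhs, rhs] at key
  rw [key, integral_zero]

lemma hasDerivAt_W (s : ℝ) : HasDerivAt W (W' s) s := by
  have h : HasDerivAt (fun t : ℝ => 18 * t ^ 2 * (1 - t) ^ 2)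
      ((18 * (2 * s)) * (1 - s) ^ 2 + (18 * s ^ 2) * (2 * (1 - s) * (-1))) s := by
    have h1 : HasDerivAt (fun t : ℝ => 18 * t ^ 2) (18 * (2 * s)) s := by
      simpa using ((hasDerivAt_pow 2 s).const_mul (18 : ℝ))
    have h2 : HasDerivAt (fun t : ℝ => (1 - t) ^ 2) (2 * (1 - s) * (-1)) s := by
      have := ((hasDerivAt_id s).const_sub (1:ℝ)).fun_pow 2
      simpa using this
    simpa using h1.fun_mul h2
  have he : (18 * (2 * s)) * (1 - s) ^ 2 + (18 * s ^ 2) * (2 * (1 - s) * (-1)) = W' s := by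
    unfold W'; ring
  rw [he] at h
  exact h

section pdlemmas
variable {n : ℕ} {f g : EuclideanSpace ℝ (Fin n) → ℝ} {x : EuclideanSpace ℝ (Fin n)} {i : Fin n}

lemma pd_add (hf : DifferentiableAt ℝ f x) (hg : DifferentiableAt ℝ g x) :
    pd (fun y => f y + g y) i x = pd f i x + pd g i x := by
  unfold pd; rw [fderiv_fun_add hf hg]; simp

lemma pd_sub (hf : DifferentiableAt ℝ f x) (hg : DifferentiableAt ℝ g x) :
    pd (fun y => f y - g y) i x = pd f i x - pd g i x := by
  unfold pd; rw [fderiv_fun_sub hf hg]; simp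

lemma pd_mul (hf : DifferentiableAt ℝ f x) (hg : DifferentiableAt ℝ g x) :
    pd (fun y => f y * g y) i x = pd f i x * g x + f x * pd g i x := by
  unfold pd; rw [fderiv_fun_mul hf hg]; simp; ring

lemma pd_const_mul (c : ℝ) (hf : DifferentiableAt ℝ f x) :
    pd (fun y => c * f y) i x = c * pd f i x := by
  unfold pd; rw [fderiv_const_mul hf]; simp

lemma pd_mul_const (c : ℝ) (hf : DifferentiableAt ℝ f x) :
    pd (fun y => f y * c) i x = pd f i x * c := by
  unfold pd; rw [fderiv_mul_const hf]; simp [mul_comm]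

lemma pd_div_const (c : ℝ) (hf : DifferentiableAt ℝ f x) :
    pd (fun y => f y / c) i x = pd f i x / c := by
  simp only [div_eq_mul_inv]; exact pd_mul_const _ hf

lemma pd_sum {ι : Type*} (s : Finset ι) (F : ι → EuclideanSpace ℝ (Fin n) → ℝ)
    (hF : ∀ l ∈ s, DifferentiableAt ℝ (F l) x) :
    pd (fun y => ∑ l ∈ s, F l y) i x = ∑ l ∈ s, pd (F l) i x := by
  unfold pd; rw [fderiv_fun_sum hF]; simp

lemma pd_sq (hf : DifferentiableAt ℝ f x) :
    pd (fun y => f y ^ 2) i x = 2 * f x * pd f i x := by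
  have h : (fun y => f y ^ 2) = fun y => f y * f y := by funext y; ring
  rw [h, pd_mul hf hf]; ring

lemma pd_comp_W (hf : DifferentiableAt ℝ f x) :
    pd (fun y => W (f y)) i x = W' (f x) * pd f i x := by
  have h := (hasDerivAt_W (f x)).comp_hasFDerivAt x hf.hasFDerivAt
  unfold pd
  rw [show (fun y => W (f y)) = W ∘ f from rfl, h.fderiv]
  simp

end pdlemmas

section secondDeriv
variable {n : ℕ} {φ : EuclideanSpace ℝ (Fin n) → ℝ} {Ω : Set (EuclideanSpace ℝ (Fin n))}

lemma contDiffOn_pd (hΩ : IsOpen Ω) (hφ : ContDiffOn ℝ 2 φ Ω) (l : Fin n) :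
    ContDiffOn ℝ 1 (pd φ l) Ω :=
  (hφ.fderiv_of_isOpen hΩ (by norm_num)).clm_apply contDiffOn_const

lemma pd_pd_eq (hΩ : IsOpen Ω) (hφ : ContDiffOn ℝ 2 φ Ω) {x : EuclideanSpace ℝ (Fin n)}
    (hx : x ∈ Ω) (l m : Fin n) :
    pd (pd φ l) m x =
      fderiv ℝ (fderiv ℝ φ) x (EuclideanSpace.single m 1) (EuclideanSpace.single l 1) := by
  have hA : DifferentiableAt ℝ (fderiv ℝ φ) x :=
    ((hφ.fderiv_of_isOpen (m := 1) hΩ (by norm_num)).differentiableOn one_ne_zero).differentiableAt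
      (hΩ.mem_nhds hx)
  have h := fderiv_clm_apply hA (differentiableAt_const (EuclideanSpace.single l 1))
  unfold pd
  rw [h]
  simp

lemma pd_pd_symm (hΩ : IsOpen Ω) (hφ : ContDiffOn ℝ 2 φ Ω) {x : EuclideanSpace ℝ (Fin n)}
    (hx : x ∈ Ω) (l m : Fin n) : pd (pd φ l) m x = pd (pd φ m) l x := by
  rw [pd_pd_eq hΩ hφ hx, pd_pd_eq hΩ hφ hx]
  exact (hφ.contDiffAt (hΩ.mem_nhds hx)).isSymmSndFDerivAt (by norm_num) _ _

lemma contDiffOn_Tsur (hΩ : IsOpen Ω) (hφ : ContDiffOn ℝ 2 φ Ω) (γ₀ ξ : ℝ) (i j : Fin n) :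
    ContDiffOn ℝ 1 (Tsur γ₀ ξ φ i j) Ω := by
  have hW1 : ContDiff ℝ 1 W := by unfold W; fun_prop
  have hp := contDiffOn_pd hΩ hφ
  have h1 : ContDiffOn ℝ 1 (fun y => ∑ l, pd φ l y ^ 2) Ω :=
    ContDiffOn.sum fun l _ => (hp l).pow 2
  have h2 : ContDiffOn ℝ 1 (fun y => W (φ y)) Ω :=
    hW1.comp_contDiffOn (hφ.of_le one_le_two)
  have hT : Tsur γ₀ ξ φ i j = fun y => γ₀ *
      ((ξ / 2 * ∑ l, pd φ l y ^ 2 + W (φ y) / ξ) * (if i = j then (1:ℝ) else 0)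
        - ξ * pd φ i y * pd φ j y) := rfl
  rw [hT]
  exact contDiffOn_const.mul ((((contDiffOn_const.mul h1).add (h2.div_const _)).mul
    contDiffOn_const).sub ((contDiffOn_const.mul (hp i)).mul (hp j)))

lemma pd_Tsur (hΩ : IsOpen Ω) (hφ : ContDiffOn ℝ 2 φ Ω) {x : EuclideanSpace ℝ (Fin n)}
    (hx : x ∈ Ω) (γ₀ ξ : ℝ) (i j m : Fin n) :
    pd (Tsur γ₀ ξ φ i j) m x
      = γ₀ * ((ξ * (∑ l, pd φ l x * pd (pd φ l) m x) + W' (φ x) * pd φ m x / ξ)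
          * (if i = j then 1 else 0)
        - ξ * (pd (pd φ i) m x * pd φ j x + pd φ i x * pd (pd φ j) m x)) := by
  have dphi : DifferentiableAt ℝ φ x :=
    ((hφ.of_le one_le_two).differentiableOn one_ne_zero).differentiableAt (hΩ.mem_nhds hx)
  have dp : ∀ l, DifferentiableAt ℝ (pd φ l) x := fun l =>
    ((contDiffOn_pd hΩ hφ l).differentiableOn one_ne_zero).differentiableAt (hΩ.mem_nhds hx)
  have dsq : ∀ l : Fin n, DifferentiableAt ℝ (fun y => pd φ l y ^ 2) x := fun l => (dp l).pow 2
  have dS : DifferentiableAt ℝ (fun y => ∑ l, pd φ l y ^ 2) x :=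
    DifferentiableAt.fun_sum fun l _ => dsq l
  have dcS : DifferentiableAt ℝ (fun y => ξ / 2 * ∑ l, pd φ l y ^ 2) x := dS.const_mul _
  have dW : DifferentiableAt ℝ (fun y => W (φ y)) x :=
    ((hasDerivAt_W (φ x)).comp_hasFDerivAt x dphi.hasFDerivAt).differentiableAt
  have dWd : DifferentiableAt ℝ (fun y => W (φ y) / ξ) x := by
    simpa only [div_eq_mul_inv] using dW.mul_const ξ⁻¹
  have dQ : DifferentiableAt ℝ (fun y => ξ / 2 * ∑ l, pd φ l y ^ 2 + W (φ y) / ξ) x :=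
    dcS.add dWd
  have dQδ : DifferentiableAt ℝ
      (fun y => (ξ / 2 * ∑ l, pd φ l y ^ 2 + W (φ y) / ξ) * (if i = j then (1:ℝ) else 0)) x :=
    dQ.mul_const _
  have dpi : DifferentiableAt ℝ (fun y => ξ * pd φ i y) x := (dp i).const_mul ξ
  have dpij : DifferentiableAt ℝ (fun y => ξ * pd φ i y * pd φ j y) x := dpi.mul (dp j)
  have hT : Tsur γ₀ ξ φ i j = fun y => γ₀ *
      ((ξ / 2 * ∑ l, pd φ l y ^ 2 + W (φ y) / ξ) * (if i = j then (1:ℝ) else 0)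
        - ξ * pd φ i y * pd φ j y) := rfl
  rw [hT, pd_const_mul _ (dQδ.fun_sub dpij), pd_sub dQδ dpij,
    pd_mul_const _ dQ, pd_add dcS dWd, pd_const_mul _ dS,
    pd_sum Finset.univ (fun l => fun y => pd φ l y ^ 2) (fun l _ => dsq l),
    pd_div_const _ dW, pd_comp_W dphi, pd_mul dpi (dp j), pd_const_mul _ (dp i)]
  have hs : ∑ l, pd (fun y => pd φ l y ^ 2) m x = ∑ l, 2 * pd φ l x * pd (pd φ l) m x :=
    Finset.sum_congr rfl fun l _ => pd_sq (dp l)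
  rw [hs]
  have h2 : ξ / 2 * (∑ l, 2 * pd φ l x * pd (pd φ l) m x)
      = ξ * ∑ l, pd φ l x * pd (pd φ l) m x := by
    rw [Finset.mul_sum, Finset.mul_sum]
    exact Finset.sum_congr rfl fun l _ => by ring
  rw [h2]
  ring

end secondDeriv

end aux
/-- `∫_Ω γ₀ (−ξΔφ + W'(φ)/ξ) (∇φ · V) dx = − ∫_Ω T : ∇V dx` for compactly supported C¹ `V`. -/
theorem surface_stress_integration_by_parts {n : ℕ}
    (Ω : Set (EuclideanSpace ℝ (Fin n))) (hΩ : IsOpen Ω)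
    (φ : EuclideanSpace ℝ (Fin n) → ℝ) (hφ : ContDiffOn ℝ 2 φ Ω)
    (ξ γ₀ : ℝ) (hξ : 0 < ξ) (hγ : 0 < γ₀)
    (V : EuclideanSpace ℝ (Fin n) → EuclideanSpace ℝ (Fin n))
    (hV : ContDiff ℝ 1 V) (hVcpt : HasCompactSupport V) (hVsupp : tsupport V ⊆ Ω) :
    ∫ x in Ω, γ₀ * (-ξ * (∑ j, pd (pd φ j) j x) + W' (φ x) / ξ)
        * (∑ i, pd φ i x * V x i)
      = -∫ x in Ω, ∑ i, ∑ j, Tsur γ₀ ξ φ i j x * pd (fun y => V y i) j x := by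
  classical
  have hVi : ∀ i : Fin n, ContDiff ℝ 1 (fun x => V x i) := fun i =>
    (EuclideanSpace.proj (𝕜 := ℝ) i).contDiff.comp hV
  have hT : ∀ i j : Fin n, ContDiffOn ℝ 1 (Tsur γ₀ ξ φ i j) Ω := contDiffOn_Tsur hΩ hφ γ₀ ξ
  -- the vector field whose divergence we integrate
  set G : Fin n → EuclideanSpace ℝ (Fin n) → ℝ :=
    fun j y => ∑ i, Tsur γ₀ ξ φ i j y * V y i with hGdef
  have hGsupp : ∀ j, Function.support (G j) ⊆ tsupport V := by
    intro j x hx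
    by_contra hxx
    apply hx
    have hVx : V x = 0 := image_eq_zero_of_notMem_tsupport hxx
    simp only [hGdef]
    refine Finset.sum_eq_zero fun i _ => ?_
    rw [hVx]
    simp
  have hGev : ∀ j (x : EuclideanSpace ℝ (Fin n)), x ∉ tsupport V →
      G j =ᶠ[nhds x] (fun _ => 0) := by
    intro j x hx
    filter_upwards [(isClosed_tsupport V).isOpen_compl.mem_nhds hx] with y hy
    by_contra hc
    exact hy (hGsupp j hc)
  have hGc : ∀ j, ContDiff ℝ 1 (G j) := by
    intro j
    rw [contDiff_iff_contDiffAt]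
    intro x
    by_cases hx : x ∈ Ω
    · have hGΩ : ContDiffOn ℝ 1 (G j) Ω :=
        ContDiffOn.sum fun i _ => (hT i j).mul ((hVi i).contDiffOn)
      exact hGΩ.contDiffAt (hΩ.mem_nhds hx)
    · have hx' : x ∉ tsupport V := fun h => hx (hVsupp h)
      exact (contDiffAt_const (c := (0:ℝ))).congr_of_eventuallyEq (hGev j x hx')
  have hpdG0 : ∀ j (x : EuclideanSpace ℝ (Fin n)), x ∉ tsupport V → pd (G j) j x = 0 := by
    intro j x hx
    unfold pd
    rw [(hGev j x hx).fderiv_eq]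
    simp
  have hpdV0 : ∀ (i j : Fin n) (x : EuclideanSpace ℝ (Fin n)), x ∉ tsupport V →
      pd (fun y => V y i) j x = 0 := by
    intro i j x hx
    have hev : (fun y => V y i) =ᶠ[nhds x] (fun _ => 0) := by
      filter_upwards [(isClosed_tsupport V).isOpen_compl.mem_nhds hx] with y hy
      rw [image_eq_zero_of_notMem_tsupport hy]
      rfl
    unfold pd
    rw [hev.fderiv_eq]
    simp
  set A : EuclideanSpace ℝ (Fin n) → ℝ := fun x =>
    γ₀ * (-ξ * (∑ j, pd (pd φ j) j x) + W' (φ x) / ξ) * (∑ i, pd φ i x * V x i) with hAdef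
  set B : EuclideanSpace ℝ (Fin n) → ℝ := fun x =>
    ∑ i, ∑ j, Tsur γ₀ ξ φ i j x * pd (fun y => V y i) j x with hBdef
  have hA0 : ∀ x ∉ tsupport V, A x = 0 := by
    intro x hx
    have hVx : V x = 0 := image_eq_zero_of_notMem_tsupport hx
    have : (∑ i, pd φ i x * V x i) = 0 := by
      refine Finset.sum_eq_zero fun i _ => ?_
      rw [hVx]
      simp
    simp only [hAdef, this, mul_zero]
  have hB0 : ∀ x ∉ tsupport V, B x = 0 := by
    intro x hx
    simp only [hBdef]
    exact Finset.sum_eq_zero fun i _ => Finset.sum_eq_zero fun j _ => by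
      rw [hpdV0 i j x hx, mul_zero]
  -- the pointwise divergence identity on Ω
  have hdiv : ∀ x ∈ Ω, (∑ j, pd (G j) j x) = A x + B x := by
    intro x hx
    have hdT : ∀ i j : Fin n, DifferentiableAt ℝ (Tsur γ₀ ξ φ i j) x := fun i j =>
      ((hT i j).differentiableOn one_ne_zero).differentiableAt (hΩ.mem_nhds hx)
    have hdV : ∀ i : Fin n, DifferentiableAt ℝ (fun y => V y i) x := fun i =>
      ((hVi i).differentiable one_ne_zero) x
    have hsymm : ∀ l m : Fin n, pd (pd φ l) m x = pd (pd φ m) l x := pd_pd_symm hΩ hφ hx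
    have h1 : ∀ j : Fin n, pd (G j) j x = ∑ i, (pd (Tsur γ₀ ξ φ i j) j x * V x i
        + Tsur γ₀ ξ φ i j x * pd (fun y => V y i) j x) := by
      intro j
      have hGj : G j = fun y => ∑ i, Tsur γ₀ ξ φ i j y * V y i := rfl
      rw [hGj, pd_sum Finset.univ (fun i => fun y => Tsur γ₀ ξ φ i j y * V y i)
        (fun i _ => (hdT i j).mul (hdV i))]
      exact Finset.sum_congr rfl fun i _ => pd_mul (hdT i j) (hdV i)
    have h3 : ∀ i : Fin n, ∑ j, pd (Tsur γ₀ ξ φ i j) j x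
        = γ₀ * (-ξ * (∑ j, pd (pd φ j) j x) + W' (φ x) / ξ) * pd φ i x := by
      intro i
      have step1 : ∑ j, pd (Tsur γ₀ ξ φ i j) j x
          = ∑ j, ((if i = j then
              γ₀ * (ξ * (∑ l, pd φ l x * pd (pd φ l) j x) + W' (φ x) * pd φ j x / ξ) else 0)
            - γ₀ * (ξ * (pd (pd φ i) j x * pd φ j x + pd φ i x * pd (pd φ j) j x))) := by
        refine Finset.sum_congr rfl fun j _ => ?_
        rw [pd_Tsur hΩ hφ hx γ₀ ξ i j j]
        by_cases hij : i = j
        · subst hij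
          simp only [eq_self_iff_true, if_true, ite_true, mul_one]
          ring
        · simp only [if_neg hij]
          ring
      rw [step1, Finset.sum_sub_distrib, Finset.sum_ite_eq]
      simp only [Finset.mem_univ, if_pos]
      have e1 : ∑ l, pd φ l x * pd (pd φ l) i x = ∑ j, pd (pd φ i) j x * pd φ j x :=
        Finset.sum_congr rfl fun l _ => by rw [hsymm l i]; ring
      have e2 : ∑ j, γ₀ * (ξ * (pd (pd φ i) j x * pd φ j x + pd φ i x * pd (pd φ j) j x))
          = γ₀ * ξ * (∑ j, pd (pd φ i) j x * pd φ j x)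
            + γ₀ * ξ * pd φ i x * (∑ j, pd (pd φ j) j x) := by
        rw [Finset.mul_sum, Finset.mul_sum, ← Finset.sum_add_distrib]
        refine Finset.sum_congr rfl fun j _ => ?_
        ring
      rw [e1, e2]
      ring
    calc ∑ j, pd (G j) j x
        = ∑ j, ∑ i, (pd (Tsur γ₀ ξ φ i j) j x * V x i
            + Tsur γ₀ ξ φ i j x * pd (fun y => V y i) j x) :=
          Finset.sum_congr rfl fun j _ => h1 j
      _ = (∑ j, ∑ i, pd (Tsur γ₀ ξ φ i j) j x * V x i)
            + ∑ j, ∑ i, Tsur γ₀ ξ φ i j x * pd (fun y => V y i) j x := by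
          rw [← Finset.sum_add_distrib]
          exact Finset.sum_congr rfl fun j _ => by rw [← Finset.sum_add_distrib]
      _ = (∑ i, ∑ j, pd (Tsur γ₀ ξ φ i j) j x * V x i)
            + ∑ i, ∑ j, Tsur γ₀ ξ φ i j x * pd (fun y => V y i) j x := by
          rw [Finset.sum_comm (f := fun j i => pd (Tsur γ₀ ξ φ i j) j x * V x i),
            Finset.sum_comm (f := fun j i => Tsur γ₀ ξ φ i j x * pd (fun y => V y i) j x)]
      _ = A x + B x := by
          congr 1
          have : ∀ i : Fin n, ∑ j, pd (Tsur γ₀ ξ φ i j) j x * V x i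
              = γ₀ * (-ξ * (∑ j, pd (pd φ j) j x) + W' (φ x) / ξ) * (pd φ i x * V x i) := by
            intro i
            rw [← Finset.sum_mul, h3 i]
            ring
          rw [Finset.sum_congr rfl fun i _ => this i, ← Finset.mul_sum]
  -- continuity of the integrands on Ω
  have hpdc : ∀ l : Fin n, ContinuousOn (pd φ l) Ω := fun l =>
    (contDiffOn_pd hΩ hφ l).continuousOn
  have hpdpdc : ∀ l m : Fin n, ContinuousOn (pd (pd φ l) m) Ω := fun l m =>
    (((contDiffOn_pd hΩ hφ l).fderiv_of_isOpen (m := 0) hΩ (by norm_num)).clm_apply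
      contDiffOn_const).continuousOn
  have hW'c : Continuous W' := by unfold W'; fun_prop
  have hφc : ContinuousOn φ Ω := hφ.continuousOn
  have hVic : ∀ i : Fin n, Continuous (fun x => V x i) := fun i => (hVi i).continuous
  have hpdVc : ∀ i j : Fin n, Continuous (pd (fun y => V y i) j) := by
    intro i j
    have h0 : ContDiff ℝ 0 (fderiv ℝ (fun y => V y i)) := (hVi i).fderiv_right (m := 0) (by norm_num)
    exact ((h0.clm_apply contDiff_const).continuous :)
  have hAc : ContinuousOn A Ω := by
    have c1 : ContinuousOn (fun x => ∑ j, pd (pd φ j) j x) Ω :=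
      continuousOn_finset_sum _ fun j _ => hpdpdc j j
    have c2 : ContinuousOn (fun x => W' (φ x)) Ω := hW'c.comp_continuousOn hφc
    have c3 : ContinuousOn (fun x => ∑ i, pd φ i x * V x i) Ω :=
      continuousOn_finset_sum _ fun i _ => (hpdc i).mul (hVic i).continuousOn
    exact (continuousOn_const.mul ((continuousOn_const.mul c1).add (c2.div_const _))).mul c3
  have hBc : ContinuousOn B Ω :=
    continuousOn_finset_sum _ fun i _ => continuousOn_finset_sum _ fun j _ =>
      ((hT i j).continuousOn).mul (hpdVc i j).continuousOn
  -- integrability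
  have hint : ∀ f : EuclideanSpace ℝ (Fin n) → ℝ, ContinuousOn f Ω →
      (∀ x ∉ tsupport V, f x = 0) → IntegrableOn f Ω := by
    intro f hf h0
    have h1 : IntegrableOn f (tsupport V) := (hf.mono hVsupp).integrableOn_compact hVcpt
    have h2 : IntegrableOn f (Ω \ tsupport V) := by
      have heq : Set.EqOn f 0 (Ω \ tsupport V) := fun x hx => h0 x hx.2
      exact (integrableOn_congr_fun heq
        (hΩ.measurableSet.diff (isClosed_tsupport V).measurableSet)).2 (integrableOn_zero)
    exact (h2.union h1).mono_set fun x hx => by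
      by_cases h : x ∈ tsupport V
      · exact Or.inr h
      · exact Or.inl ⟨hx, h⟩
  have hAint : IntegrableOn A Ω := hint A hAc hA0
  have hBint : IntegrableOn B Ω := hint B hBc hB0
  -- the key identity
  have key : (∫ x in Ω, A x) + (∫ x in Ω, B x) = 0 := by
    rw [← integral_add hAint hBint]
    have e1 : ∫ x in Ω, (A x + B x) = ∫ x in Ω, ∑ j, pd (G j) j x :=
      setIntegral_congr_fun hΩ.measurableSet (fun x hx => (hdiv x hx).symm)
    rw [e1, setIntegral_eq_integral_of_forall_compl_eq_zero (fun x hx =>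
      Finset.sum_eq_zero fun j _ => hpdG0 j x (fun h => hx (hVsupp h)))]
    have hGint : ∀ j : Fin n, Integrable (fun x => pd (G j) j x) := by
      intro j
      have hcont : Continuous (fun x => pd (G j) j x) := by
        have h0 : ContDiff ℝ 0 (fderiv ℝ (G j)) := (hGc j).fderiv_right (m := 0) (by norm_num)
        exact ((h0.clm_apply contDiff_const).continuous :)
      have hcs : HasCompactSupport (fun x => pd (G j) j x) :=
        HasCompactSupport.of_support_subset_isCompact hVcpt (fun x hx => by
          by_contra hxx
          exact hx (hpdG0 j x hxx))
      exact hcont.integrable_of_hasCompactSupport hcs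
    rw [integral_finset_sum _ (fun j _ => hGint j)]
    exact Finset.sum_eq_zero fun j _ => integral_pd_zero (G j) (hGc j)
      (HasCompactSupport.of_support_subset_isCompact hVcpt (hGsupp j)) _
  show (∫ x in Ω, A x) = -(∫ x in Ω, B x)
  linarith [key]
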